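/- Let A be an irreducible Metzler matrix with s(A) = 0. Then there exists a positive definite diagonal matrix D such that AᵀD + DA is negative semi-definite, and 0 is a simple eigenvalue of AᵀD + DA with a positive eigenvector. -/

import Mathlib

open Matrix

/-- `μ` is a (complex) eigenvalue of the matrix `A`. -/
def isEig {n : ℕ} (A : Matrix (Fin n) (Fin n) ℂ) (μ : ℂ) : Prop :=
  ∃ v : Fin n → ℂ, v ≠ 0 ∧ A.mulVec v = μ • v

/-- `s(A)`: the maximum real part of an eigenvalue of the real matrix `A`. -/
noncomputable def sMax {n : ℕ} (A : Matrix (Fin n) (Fin n) ℝ) : ℝ :=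
  sSup {r : ℝ | ∃ μ : ℂ, isEig (A.map Complex.ofReal) μ ∧ r = μ.re}

/-- A real square matrix is Metzler if its off-diagonal entries are nonnegative. -/
def IsMetzler {n : ℕ} (A : Matrix (Fin n) (Fin n) ℝ) : Prop :=
  ∀ i j, i ≠ j → 0 ≤ A i j

/-- Irreducibility of a matrix: no nontrivial invariant coordinate subset. -/
def IsIrreducibleMat {n : ℕ} (A : Matrix (Fin n) (Fin n) ℝ) : Prop :=
  ∀ S : Set (Fin n), S.Nonempty → S ≠ Set.univ → ∃ i ∈ S, ∃ j, j ∉ S ∧ A i j ≠ 0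

/-- Negative semi-definiteness of the quadratic form of `P`. -/
def NegSemiDefQ {n : ℕ} (P : Matrix (Fin n) (Fin n) ℝ) : Prop :=
  ∀ x : Fin n → ℝ, x ⬝ᵥ P.mulVec x ≤ 0

section aux
variable {n : ℕ}

lemma mul_entry_nonneg {M N : Matrix (Fin n) (Fin n) ℝ} (hM : ∀ i j, 0 ≤ M i j)
    (hN : ∀ i j, 0 ≤ N i j) : ∀ i j, 0 ≤ (M * N) i j := by
  intro i j
  rw [Matrix.mul_apply]
  exact Finset.sum_nonneg fun k _ => mul_nonneg (hM i k) (hN k j)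

lemma pow_entry_nonneg {M : Matrix (Fin n) (Fin n) ℝ} (hM : ∀ i j, 0 ≤ M i j) (k : ℕ) :
    ∀ i j, 0 ≤ (M ^ k) i j := by
  induction k with
  | zero => intro i j; simp [Matrix.one_apply]; split <;> norm_num
  | succ k ih =>
    rw [pow_succ]
    exact mul_entry_nonneg ih hM

lemma mulVec_nonneg {M : Matrix (Fin n) (Fin n) ℝ} (hM : ∀ i j, 0 ≤ M i j)
    {x : Fin n → ℝ} (hx : ∀ i, 0 ≤ x i) : ∀ i, 0 ≤ M.mulVec x i := by
  intro i
  simp only [Matrix.mulVec, dotProduct]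
  exact Finset.sum_nonneg fun j _ => mul_nonneg (hM i j) (hx j)

open scoped Classical in
/-- support of a vector as a Finset -/
noncomputable def suppF (y : Fin n → ℝ) : Finset (Fin n) := Finset.univ.filter (fun i => y i ≠ 0)

lemma mem_suppF {y : Fin n → ℝ} {i : Fin n} : i ∈ suppF y ↔ y i ≠ 0 := by
  classical simp [suppF]

section onestep
variable {B : Matrix (Fin n) (Fin n) ℝ}

lemma P_nonneg (hB : ∀ i j, 0 ≤ B i j) : ∀ i j, 0 ≤ (1 + B) i j := by
  intro i j
  simp only [Matrix.add_apply, Matrix.one_apply]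
  split <;> linarith [hB i j]

lemma supp_mono (hB : ∀ i j, 0 ≤ B i j) {y : Fin n → ℝ} (hy : ∀ i, 0 ≤ y i) :
    suppF y ⊆ suppF ((1 + B).mulVec y) := by
  intro i hi
  rw [mem_suppF] at hi ⊢
  have h1 : (1 + B) i i * y i ≤ (1 + B).mulVec y i := by
    simp only [Matrix.mulVec, dotProduct]
    apply Finset.single_le_sum (f := fun j => (1 + B) i j * y j)
      (fun j _ => mul_nonneg (P_nonneg hB i j) (hy j)) (Finset.mem_univ i)
  have h2 : 0 < (1 + B) i i * y i := by
    have : 0 < y i := lt_of_le_of_ne (hy i) (Ne.symm hi)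
    have : 0 < (1 + B) i i := by
      simp only [Matrix.add_apply, Matrix.one_apply_eq]
      linarith [hB i i]
    positivity
  exact ne_of_gt (lt_of_lt_of_le h2 h1)

lemma supp_grow (hB : ∀ i j, 0 ≤ B i j) (hIrr : IsIrreducibleMat B) {y : Fin n → ℝ} (hy : ∀ i, 0 ≤ y i)
    (hne : (suppF y).Nonempty) (hnu : suppF y ≠ Finset.univ) :
    ∃ i, i ∉ suppF y ∧ i ∈ suppF ((1 + B).mulVec y) := by
  -- apply irreducibility to the complement of the support
  set S : Set (Fin n) := {i | y i = 0} with hS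
  have hSne : S.Nonempty := by
    by_contra h
    apply hnu
    rw [Set.not_nonempty_iff_eq_empty] at h
    apply Finset.eq_univ_of_forall
    intro i; rw [mem_suppF]
    intro h0
    have : i ∈ S := h0
    rw [h] at this
    exact this
  have hSnu : S ≠ Set.univ := by
    obtain ⟨i, hi⟩ := hne
    rw [mem_suppF] at hi
    intro h
    exact hi (by have := h ▸ (Set.mem_univ i); exact this)
  obtain ⟨i, hiS, j, hjS, hij⟩ := hIrr S hSne hSnu
  refine ⟨i, ?_, ?_⟩
  · rw [mem_suppF]; simpa [hS] using hiS
  · rw [mem_suppF]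
    have hyj : 0 < y j := lt_of_le_of_ne (hy j) (Ne.symm (by simpa [hS] using hjS))
    have hBij : 0 < B i j := lt_of_le_of_ne (hB i j) (Ne.symm hij)
    have hinej : i ≠ j := by
      intro h; apply hjS; rw [← h]; exact hiS
    have h1 : (1 + B) i j * y j ≤ (1 + B).mulVec y i := by
      simp only [Matrix.mulVec, dotProduct]
      exact Finset.single_le_sum (f := fun k => (1 + B) i k * y k)
        (fun k _ => mul_nonneg (P_nonneg hB i k) (hy k)) (Finset.mem_univ j)
    have h2 : 0 < (1 + B) i j * y j := by
      have : (1 + B) i j = B i j := by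
        simp [Matrix.add_apply, Matrix.one_apply_ne hinej]
      rw [this]; positivity
    exact ne_of_gt (lt_of_lt_of_le h2 h1)

lemma card_supp_grow (hB : ∀ i j, 0 ≤ B i j) (hIrr : IsIrreducibleMat B) :
    ∀ (k : ℕ) (y : Fin n → ℝ), (∀ i, 0 ≤ y i) → y ≠ 0 →
      min n ((suppF y).card + k) ≤ (suppF (((1 + B) ^ k).mulVec y)).card := by
  intro k
  induction k with
  | zero =>
    intro y hy hy0
    simpa using min_le_right n (suppF y).card
  | succ k ih =>
    intro y hy hy0
    have hne : (suppF y).Nonempty := by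
      rcases Function.ne_iff.1 hy0 with ⟨i, hi⟩
      exact ⟨i, mem_suppF.2 hi⟩
    set y' := (1 + B).mulVec y with hy'def
    have hy' : ∀ i, 0 ≤ y' i := mulVec_nonneg (P_nonneg hB) hy
    have hy'0 : y' ≠ 0 := by
      obtain ⟨i, hi⟩ := hne
      have := supp_mono hB hy hi
      rw [mem_suppF] at this
      exact fun h => this (by simpa using congrFun h i)
    have hrw : ((1 + B) ^ (k + 1)).mulVec y = ((1 + B) ^ k).mulVec y' := by
      rw [hy'def, Matrix.mulVec_mulVec, ← pow_succ]
    rw [hrw]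
    have key : min n ((suppF y).card + 1) ≤ (suppF y').card := by
      by_cases hu : suppF y = Finset.univ
      · calc min n ((suppF y).card + 1) ≤ n := min_le_left _ _
          _ = (suppF y).card := by rw [hu, Finset.card_univ, Fintype.card_fin]
          _ ≤ (suppF y').card := Finset.card_le_card (supp_mono hB hy)
      · obtain ⟨i, hi1, hi2⟩ := supp_grow hB hIrr hy hne hu
        have hss : suppF y ⊂ suppF y' :=
          ⟨supp_mono hB hy, fun h => hi1 (h hi2)⟩
        calc min n ((suppF y).card + 1) ≤ (suppF y).card + 1 := min_le_right _ _
          _ ≤ (suppF y').card := Finset.card_lt_card hss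
    calc min n ((suppF y).card + (k + 1)) = min n (((suppF y).card + 1) + k) := by ring_nf
      _ ≤ min n (min n ((suppF y).card + 1) + k) := by
          rcases le_total n ((suppF y).card + 1) with h | h
          · rw [min_eq_left h, min_eq_left (Nat.le_add_right n k)]
            exact min_le_left _ _
          · rw [min_eq_right h]
      _ ≤ min n ((suppF y').card + k) := min_le_min le_rfl (Nat.add_le_add_right key k)
      _ ≤ _ := ih y' hy' hy'0

lemma pos_after (hB : ∀ i j, 0 ≤ B i j) (hIrr : IsIrreducibleMat B) {x : Fin n → ℝ}
    (hx : ∀ i, 0 ≤ x i) (hx0 : x ≠ 0) :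
    ∀ i, 0 < ((1 + B) ^ (n - 1)).mulVec x i := by
  have hn : 0 < n := by
    rcases Nat.eq_zero_or_pos n with h | h
    · exfalso; apply hx0; funext i; exact absurd i.2 (by omega)
    · exact h
  have hcard : 1 ≤ (suppF x).card := by
    rcases Function.ne_iff.1 hx0 with ⟨i, hi⟩
    exact Finset.card_pos.2 ⟨i, mem_suppF.2 hi⟩
  have h := card_supp_grow hB hIrr (n - 1) x hx hx0
  have h2 : n ≤ (suppF (((1 + B) ^ (n - 1)).mulVec x)).card := by
    have : min n ((suppF x).card + (n - 1)) = n := by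
      rw [min_eq_left]; omega
    omega
  have huniv : suppF (((1 + B) ^ (n - 1)).mulVec x) = Finset.univ := by
    apply Finset.eq_univ_of_card
    have := Finset.card_le_univ (suppF (((1 + B) ^ (n - 1)).mulVec x))
    simp only [Finset.card_univ, Fintype.card_fin] at this ⊢
    omega
  intro i
  have hne : ((1 + B) ^ (n - 1)).mulVec x i ≠ 0 := by
    have : i ∈ suppF (((1 + B) ^ (n - 1)).mulVec x) := huniv ▸ Finset.mem_univ i
    exact mem_suppF.1 this
  have hge : 0 ≤ ((1 + B) ^ (n - 1)).mulVec x i :=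
    mulVec_nonneg (pow_entry_nonneg (P_nonneg hB) (n - 1)) hx i
  exact lt_of_le_of_ne hge (Ne.symm hne)

end onestep
end aux

lemma exists_perron_nonneg {n : ℕ} (hn : 0 < n) {B : Matrix (Fin n) (Fin n) ℝ}
    (hB : ∀ i j, 0 ≤ B i j) (hIrr : IsIrreducibleMat B) :
    ∃ (r : ℝ) (u : Fin n → ℝ), (∀ i, 0 < u i) ∧ B.mulVec u = r • u := by
  haveI : NeZero n := ⟨hn.ne'⟩
  set M : ℝ := ∑ i, ∑ j, B i j with hMdef
  have hM0 : 0 ≤ M :=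
    Finset.sum_nonneg fun i _ => Finset.sum_nonneg fun j _ => hB i j
  have hbound : ∀ (t : ℝ) (q : Fin n → ℝ), (∀ i, 0 ≤ q i) → (∑ i, q i) = 1 →
      (∀ i, t * q i ≤ B.mulVec q i) → t ≤ M := by
    intro t q hq hsum hle
    have hq1 : ∀ j, q j ≤ 1 := by
      intro j
      rw [← hsum]
      exact Finset.single_le_sum (fun i _ => hq i) (Finset.mem_univ j)
    calc t = ∑ i, t * q i := by rw [← Finset.mul_sum, hsum, mul_one]
      _ ≤ ∑ i, B.mulVec q i := Finset.sum_le_sum fun i _ => hle i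
      _ = ∑ i, ∑ j, B i j * q j := by
          simp [Matrix.mulVec, dotProduct]
      _ ≤ ∑ i, ∑ j, B i j := by
          refine Finset.sum_le_sum fun i _ => Finset.sum_le_sum fun j _ => ?_
          calc B i j * q j ≤ B i j * 1 :=
                mul_le_mul_of_nonneg_left (hq1 j) (hB i j)
            _ = B i j := mul_one _
      _ = M := rfl
  set S : Set (ℝ × (Fin n → ℝ)) := {p | 0 ≤ p.1 ∧ p.1 ≤ M ∧ (∀ i, 0 ≤ p.2 i) ∧
      (∑ i, p.2 i) = 1 ∧ ∀ i, p.1 * p.2 i ≤ B.mulVec p.2 i} with hSdef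
  have hc2 : ∀ i, Continuous fun p : ℝ × (Fin n → ℝ) => p.2 i :=
    fun i => (continuous_apply i).comp continuous_snd
  have hc4 : ∀ i, Continuous fun p : ℝ × (Fin n → ℝ) => B.mulVec p.2 i := by
    intro i
    have : (fun p : ℝ × (Fin n → ℝ) => B.mulVec p.2 i)
        = fun p => ∑ j, B i j * p.2 j := by
      funext p; simp [Matrix.mulVec, dotProduct]
    rw [this]
    exact continuous_finset_sum _ fun j _ => continuous_const.mul (hc2 j)
  have hSclosed : IsClosed S := by
    have e : S = ({p : ℝ × (Fin n → ℝ) | 0 ≤ p.1} ∩ {p | p.1 ≤ M}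
        ∩ (⋂ i, {p | 0 ≤ p.2 i}) ∩ {p | (∑ i, p.2 i) = 1}
        ∩ ⋂ i, {p | p.1 * p.2 i ≤ B.mulVec p.2 i}) := by
      ext p
      simp only [hSdef, Set.mem_setOf_eq, Set.mem_inter_iff, Set.mem_iInter]
      tauto
    rw [e]
    refine ((((isClosed_le continuous_const continuous_fst).inter
        (isClosed_le continuous_fst continuous_const)).inter
        (isClosed_iInter fun i => isClosed_le continuous_const (hc2 i))).inter
        (isClosed_eq (continuous_finset_sum _ fun i _ => hc2 i) continuous_const)).inter
        (isClosed_iInter fun i => isClosed_le (continuous_fst.mul (hc2 i)) (hc4 i))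
  have hSbdd : Bornology.IsBounded S := by
    apply Bornology.IsBounded.subset (Metric.isBounded_closedBall (x := (0 : ℝ × (Fin n → ℝ))) (r := M + 1))
    intro p hp
    obtain ⟨h1, h2, h3, h4, -⟩ := hp
    rw [Metric.mem_closedBall, dist_zero_right, Prod.norm_def]
    apply max_le
    · rw [Real.norm_eq_abs, abs_of_nonneg h1]; linarith
    · rw [pi_norm_le_iff_of_nonneg (by linarith)]
      intro i
      rw [Real.norm_eq_abs, abs_of_nonneg (h3 i)]
      have : p.2 i ≤ 1 := by
        rw [← h4]
        exact Finset.single_le_sum (fun j _ => h3 j) (Finset.mem_univ i)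
      linarith
  have hScompact : IsCompact S := Metric.isCompact_of_isClosed_isBounded hSclosed hSbdd
  have hSne : S.Nonempty := by
    refine ⟨(0, fun _ => (n : ℝ)⁻¹), le_refl 0, hM0, ?_, ?_, ?_⟩
    · intro i; positivity
    · simp only [Finset.sum_const, Finset.card_univ, Fintype.card_fin, nsmul_eq_mul]
      field_simp
    · intro i
      rw [zero_mul]
      exact mulVec_nonneg hB (fun _ => by positivity) i
  obtain ⟨p, hpS, hpmax⟩ := hScompact.exists_isMaxOn hSne continuous_fst.continuousOn
  obtain ⟨hr0, hrM, hx0, hxsum, hxle⟩ := hpS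
  set r := p.1 with hrdef
  set x := p.2 with hxdef
  have hxne : x ≠ 0 := by
    intro h
    rw [h] at hxsum
    simp at hxsum
  set P : Matrix (Fin n) (Fin n) ℝ := (1 + B) ^ (n - 1) with hPdef
  have hPB : P * B = B * P :=
    ((((Commute.one_left B).add_left (Commute.refl B)).pow_left (n - 1))).eq
  have heig : B.mulVec x = r • x := by
    by_contra hne
    set y : Fin n → ℝ := B.mulVec x - r • x with hydef
    have hy : ∀ i, 0 ≤ y i := by
      intro i
      simp only [hydef, Pi.sub_apply, Pi.smul_apply, smul_eq_mul, sub_nonneg]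
      exact hxle i
    have hy0 : y ≠ 0 := by
      intro h
      exact hne (by rwa [hydef, sub_eq_zero] at h)
    have hz : ∀ i, 0 < P.mulVec x i := pos_after hB hIrr hx0 hxne
    set z := P.mulVec x with hzdef
    have hPy : ∀ i, 0 < P.mulVec y i := pos_after hB hIrr hy hy0
    have hPyz : P.mulVec y = B.mulVec z - r • z := by
      rw [hydef, Matrix.mulVec_sub, Matrix.mulVec_smul, hzdef,
        Matrix.mulVec_mulVec, Matrix.mulVec_mulVec, hPB]
    have hstrict : ∀ i, r * z i < B.mulVec z i := by
      intro i
      have := hPy i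
      rw [hPyz] at this
      simp only [Pi.sub_apply, Pi.smul_apply, smul_eq_mul, sub_pos] at this
      exact this
    set t := Finset.univ.inf' (Finset.univ_nonempty) (fun i => B.mulVec z i / z i) with htdef
    have hrt : r < t := by
      rw [htdef, Finset.lt_inf'_iff]
      intro i _
      rw [lt_div_iff₀ (hz i)]
      exact hstrict i
    have htz : ∀ i, t * z i ≤ B.mulVec z i := by
      intro i
      have ht : t ≤ B.mulVec z i / z i :=
        Finset.inf'_le _ (Finset.mem_univ i)
      rw [le_div_iff₀ (hz i)] at ht
      exact ht
    set σ := ∑ i, z i with hσdef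
    have hσ : 0 < σ :=
      Finset.sum_pos (fun i _ => hz i) Finset.univ_nonempty
    set q : Fin n → ℝ := σ⁻¹ • z with hqdef
    have hq0 : ∀ i, 0 ≤ q i := fun i => by
      simp only [hqdef, Pi.smul_apply, smul_eq_mul]
      exact mul_nonneg (inv_nonneg.2 hσ.le) (hz i).le
    have hqsum : (∑ i, q i) = 1 := by
      simp only [hqdef, Pi.smul_apply, smul_eq_mul]
      rw [← Finset.mul_sum, ← hσdef, inv_mul_cancel₀ hσ.ne']
    have hqle : ∀ i, t * q i ≤ B.mulVec q i := by
      intro i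
      rw [hqdef, Matrix.mulVec_smul]
      simp only [Pi.smul_apply, smul_eq_mul]
      calc t * (σ⁻¹ * z i) = σ⁻¹ * (t * z i) := by ring
        _ ≤ σ⁻¹ * B.mulVec z i :=
            mul_le_mul_of_nonneg_left (htz i) (by positivity)
    have htM : t ≤ M := hbound t q hq0 hqsum hqle
    have hmem : (t, q) ∈ S := ⟨le_of_lt (lt_of_le_of_lt hr0 hrt), htM, hq0, hqsum, hqle⟩
    have := hpmax hmem
    simp only [hrdef] at this
    exact absurd (lt_of_lt_of_le hrt this) (lt_irrefl r)
  -- now the positive eigenvector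
  refine ⟨r, P.mulVec x, pos_after hB hIrr hx0 hxne, ?_⟩
  rw [Matrix.mulVec_mulVec, ← hPB, ← Matrix.mulVec_mulVec, heig, Matrix.mulVec_smul]

lemma metzler_shift_nonneg {n : ℕ} {A : Matrix (Fin n) (Fin n) ℝ} (hM : IsMetzler A) :
    ∀ i j, 0 ≤ (A + (∑ k, |A k k|) • (1 : Matrix (Fin n) (Fin n) ℝ)) i j := by
  intro i j
  simp only [Matrix.add_apply, Matrix.smul_apply, Matrix.one_apply, smul_eq_mul]
  by_cases h : i = j
  · subst h
    have h1 : |A i i| ≤ ∑ k, |A k k| :=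
      Finset.single_le_sum (fun k _ => abs_nonneg (A k k)) (Finset.mem_univ i)
    have h2 := neg_abs_le (A i i)
    simp only [if_true, eq_self_iff_true, mul_one]
    linarith
  · simp only [if_neg h, mul_zero, add_zero]
    exact hM i j h

lemma irr_shift {n : ℕ} {A : Matrix (Fin n) (Fin n) ℝ} (hIrr : IsIrreducibleMat A) (c : ℝ) :
    IsIrreducibleMat (A + c • (1 : Matrix (Fin n) (Fin n) ℝ)) := by
  intro S hS1 hS2
  obtain ⟨i, hi, j, hj, hij⟩ := hIrr S hS1 hS2
  refine ⟨i, hi, j, hj, ?_⟩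
  have hne : i ≠ j := fun h => hj (h ▸ hi)
  simp only [Matrix.add_apply, Matrix.smul_apply, Matrix.one_apply, if_neg hne,
    smul_eq_mul, mul_zero, add_zero]
  exact hij

lemma exists_perron_metzler {n : ℕ} (hn : 0 < n) {A : Matrix (Fin n) (Fin n) ℝ}
    (hM : IsMetzler A) (hIrr : IsIrreducibleMat A) :
    ∃ (r : ℝ) (u : Fin n → ℝ), (∀ i, 0 < u i) ∧ A.mulVec u = r • u := by
  set c := ∑ k, |A k k| with hcdef
  obtain ⟨r, u, hu, heig⟩ :=
    exists_perron_nonneg hn (metzler_shift_nonneg hM) (irr_shift hIrr c)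
  refine ⟨r - c, u, hu, ?_⟩
  have h1 : (A + c • (1 : Matrix (Fin n) (Fin n) ℝ)).mulVec u
      = A.mulVec u + c • u := by
    rw [Matrix.add_mulVec, Matrix.smul_mulVec, Matrix.one_mulVec]
  rw [h1] at heig
  have : A.mulVec u = r • u - c • u := by
    rw [← heig]; abel
  rw [this, sub_smul]

lemma transpose_metzler {n : ℕ} {A : Matrix (Fin n) (Fin n) ℝ} (hM : IsMetzler A) :
    IsMetzler Aᵀ := fun i j hij => hM j i (Ne.symm hij)

lemma transpose_irr {n : ℕ} {A : Matrix (Fin n) (Fin n) ℝ} (hIrr : IsIrreducibleMat A) :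
    IsIrreducibleMat Aᵀ := by
  intro S hS1 hS2
  have hcne : Sᶜ.Nonempty := by
    rw [← Set.nonempty_compl] at hS2
    exact hS2
  have hcnu : Sᶜ ≠ Set.univ := by
    intro h
    obtain ⟨i, hi⟩ := hS1
    have : i ∈ Sᶜ := h ▸ Set.mem_univ i
    exact this hi
  obtain ⟨i, hi, j, hj, hij⟩ := hIrr Sᶜ hcne hcnu
  rw [Set.notMem_compl_iff] at hj
  exact ⟨j, hj, i, hi, hij⟩

lemma re_le_perron {n : ℕ} {A : Matrix (Fin n) (Fin n) ℝ} (hM : IsMetzler A)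
    {r : ℝ} {w : Fin n → ℝ} (hw : ∀ i, 0 < w i) (hAw : Aᵀ.mulVec w = r • w)
    {μ : ℂ} (hμ : isEig (A.map Complex.ofReal) μ) : μ.re ≤ r := by
  obtain ⟨v, hv0, hv⟩ := hμ
  set c := ∑ k, |A k k| with hcdef
  set Mc : Matrix (Fin n) (Fin n) ℝ := A + c • (1 : Matrix (Fin n) (Fin n) ℝ) with hMcdef
  have hMc : ∀ i j, 0 ≤ Mc i j := metzler_shift_nonneg hM
  set a : Fin n → ℝ := fun i => ‖v i‖ with hadef
  have ha : ∀ i, 0 ≤ a i := fun i => norm_nonneg _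
  have key : ∀ i, ‖μ + c‖ * a i ≤ Mc.mulVec a i := by
    intro i
    have h0 : (∑ j, (A i j : ℂ) * v j) = μ * v i := by
      have := congrFun hv i
      simpa [Matrix.mulVec, dotProduct, Matrix.map_apply] using this
    have h1 : (μ + c) * v i = ∑ j, ((Mc i j : ℝ) : ℂ) * v j := by
      have hsplit : ∀ j, ((Mc i j : ℝ) : ℂ) * v j
          = (A i j : ℂ) * v j + (if i = j then (c : ℂ) * v j else 0) := by
        intro j
        simp only [hMcdef, Matrix.add_apply, Matrix.smul_apply, Matrix.one_apply,
          smul_eq_mul]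
        by_cases h : i = j
        · subst h; simp; push_cast; ring
        · simp [h]
      rw [Finset.sum_congr rfl (fun j _ => hsplit j), Finset.sum_add_distrib]
      rw [Finset.sum_ite_eq Finset.univ i (fun j => (c : ℂ) * v j)]
      simp only [Finset.mem_univ, if_pos]
      rw [h0]
      ring
    calc ‖μ + c‖ * a i = ‖(μ + c) * v i‖ := by
          simp only [hadef, norm_mul]
      _ = ‖∑ j, ((Mc i j : ℝ) : ℂ) * v j‖ := by rw [h1]
      _ ≤ ∑ j, ‖((Mc i j : ℝ) : ℂ) * v j‖ :=
          norm_sum_le _ _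
      _ = ∑ j, Mc i j * a j := by
          refine Finset.sum_congr rfl fun j _ => ?_
          rw [norm_mul, Complex.norm_of_nonneg (hMc i j)]
      _ = Mc.mulVec a i := by simp [Matrix.mulVec, dotProduct]
  have hT : 0 < ∑ i, w i * a i := by
    apply Finset.sum_pos'
    · exact fun i _ => mul_nonneg (hw i).le (ha i)
    · obtain ⟨i, hi⟩ := Function.ne_iff.1 hv0
      refine ⟨i, Finset.mem_univ i, ?_⟩
      have : 0 < a i := by
        rw [hadef]
        simpa using norm_pos_iff.mpr hi
      exact mul_pos (hw i) this
  have hMcT : Mcᵀ.mulVec w = (r + c) • w := by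
    rw [hMcdef, Matrix.transpose_add, Matrix.transpose_smul, Matrix.transpose_one,
      Matrix.add_mulVec, Matrix.smul_mulVec, Matrix.one_mulVec, hAw, ← add_smul]
  have hsum : ‖μ + c‖ * (∑ i, w i * a i) ≤ (r + c) * (∑ i, w i * a i) := by
    calc ‖μ + c‖ * (∑ i, w i * a i)
        = ∑ i, w i * (‖μ + c‖ * a i) := by
          rw [Finset.mul_sum]; congr 1; funext i; ring
      _ ≤ ∑ i, w i * Mc.mulVec a i :=
          Finset.sum_le_sum fun i _ =>
            mul_le_mul_of_nonneg_left (key i) (hw i).le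
      _ = w ⬝ᵥ Mc.mulVec a := by simp [dotProduct]
      _ = (Mcᵀ.mulVec w) ⬝ᵥ a := by
          rw [Matrix.dotProduct_mulVec, Matrix.mulVec_transpose]
      _ = (r + c) * (∑ i, w i * a i) := by
          rw [hMcT]
          simp [dotProduct, Finset.mul_sum, mul_assoc]
  have habs : ‖μ + c‖ ≤ r + c := le_of_mul_le_mul_right hsum hT
  have hre : (μ + (c : ℂ)).re ≤ ‖μ + c‖ := Complex.re_le_norm _
  have : (μ + (c : ℂ)).re = μ.re + c := by simp
  linarith

lemma sMax_eq_perron {n : ℕ} {A : Matrix (Fin n) (Fin n) ℝ} (hM : IsMetzler A)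
    {r : ℝ} {u w : Fin n → ℝ} (hu : ∀ i, 0 < u i) (hw : ∀ i, 0 < w i)
    (hAu : A.mulVec u = r • u) (hAw : Aᵀ.mulVec w = r • w) (hn : 0 < n) :
    sMax A = r := by
  haveI : NeZero n := ⟨hn.ne'⟩
  have hmem : r ∈ {x : ℝ | ∃ μ : ℂ, isEig (A.map Complex.ofReal) μ ∧ x = μ.re} := by
    refine ⟨(r : ℂ), ⟨fun i => (u i : ℂ), ?_, ?_⟩, by simp⟩
    · intro h
      have := congrFun h (⟨0, hn⟩ : Fin n)
      simp only [Pi.zero_apply, Complex.ofReal_eq_zero] at this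
      exact (hu _).ne' this
    · funext i
      have hre : (∑ j, A i j * u j) = r * u i := by
        have := congrFun hAu i
        simpa [Matrix.mulVec, dotProduct] using this
      simp only [Matrix.mulVec, dotProduct, Matrix.map_apply, Pi.smul_apply,
        smul_eq_mul]
      calc ∑ j, ((A i j : ℝ) : ℂ) * ((u j : ℝ) : ℂ)
          = ((∑ j, A i j * u j : ℝ) : ℂ) := by push_cast; rfl
        _ = ((r * u i : ℝ) : ℂ) := by rw [hre]
        _ = (r : ℂ) * ((u i : ℝ) : ℂ) := by push_cast; rfl
  have hub : ∀ x ∈ {x : ℝ | ∃ μ : ℂ, isEig (A.map Complex.ofReal) μ ∧ x = μ.re},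
      x ≤ r := by
    rintro x ⟨μ, hμ, rfl⟩
    exact re_le_perron hM hw hAw hμ
  exact le_antisymm (csSup_le ⟨r, hmem⟩ hub) (le_csSup ⟨r, hub⟩ hmem)

/-- For an irreducible Metzler matrix `A` with `s(A) = 0`, there is a positive definite
diagonal `D` with `AᵀD + DA` negative semi-definite; moreover `0` is a simple eigenvalue
of `AᵀD + DA` with a positive eigenvector. -/
theorem stmt17 {n : ℕ} (A : Matrix (Fin n) (Fin n) ℝ)
    (hM : IsMetzler A) (hIrr : IsIrreducibleMat A) (hs : sMax A = 0) :
    ∃ d : Fin n → ℝ, (∀ i, 0 < d i) ∧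
      NegSemiDefQ (Aᵀ * diagonal d + diagonal d * A) ∧
      ∃ w : Fin n → ℝ, (∀ i, 0 < w i) ∧
        (Aᵀ * diagonal d + diagonal d * A).mulVec w = 0 ∧
        ∀ z : Fin n → ℝ, (Aᵀ * diagonal d + diagonal d * A).mulVec z = 0 →
          ∃ c : ℝ, z = c • w := by
  rcases Nat.eq_zero_or_pos n with hn | hn
  · subst hn
    refine ⟨fun _ => 1, fun i => i.elim0, ?_, fun _ => 1, fun i => i.elim0, ?_, ?_⟩
    · intro x
      simp [dotProduct]
    · funext i; exact i.elim0
    · intro z _; exact ⟨0, funext fun i => i.elim0⟩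
  haveI : NeZero n := ⟨hn.ne'⟩
  obtain ⟨r, u, hu, hAu⟩ := exists_perron_metzler hn hM hIrr
  obtain ⟨r', w, hw, hAw⟩ :=
    exists_perron_metzler hn (transpose_metzler hM) (transpose_irr hIrr)
  have hwu : 0 < w ⬝ᵥ u :=
    Finset.sum_pos (fun i _ => mul_pos (hw i) (hu i)) Finset.univ_nonempty
  have hrr' : r = r' := by
    have h1 : w ⬝ᵥ A.mulVec u = r * (w ⬝ᵥ u) := by
      rw [hAu, dotProduct_smul, smul_eq_mul]
    have h2 : w ⬝ᵥ A.mulVec u = r' * (w ⬝ᵥ u) := by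
      rw [Matrix.dotProduct_mulVec, ← Matrix.mulVec_transpose, hAw,
        smul_dotProduct, smul_eq_mul]
    exact mul_right_cancel₀ hwu.ne' (h1.symm.trans h2)
  rw [← hrr'] at hAw
  have hsr : sMax A = r := sMax_eq_perron hM hu hw hAu hAw hn
  have hr0 : r = 0 := by rw [hs] at hsr; exact hsr.symm
  have hAu0 : A.mulVec u = 0 := by rw [hAu, hr0, zero_smul]
  have hAw0 : Aᵀ.mulVec w = 0 := by rw [hAw, hr0, zero_smul]
  set d : Fin n → ℝ := fun i => w i / u i with hddef
  have hd0 : ∀ i, 0 < d i := fun i => div_pos (hw i) (hu i)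
  set Bq := Aᵀ * diagonal d + diagonal d * A with hBdef
  have hBapp : ∀ i j, Bq i j = A j i * d j + d i * A i j := by
    intro i j
    simp [hBdef, Matrix.add_apply, Matrix.mul_diagonal, Matrix.diagonal_mul,
      Matrix.transpose_apply]
  have hBsym : ∀ i j, Bq i j = Bq j i := by
    intro i j; rw [hBapp, hBapp]; ring
  have hBoff : ∀ i j, i ≠ j → 0 ≤ Bq i j := fun i j hij => by
    rw [hBapp]
    exact add_nonneg (mul_nonneg (hM j i (Ne.symm hij)) (hd0 j).le)
      (mul_nonneg (hd0 i).le (hM i j hij))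
  have hdu : (diagonal d).mulVec u = w := by
    funext i
    rw [Matrix.mulVec_diagonal]
    exact div_mul_cancel₀ (w i) (hu i).ne'
  have hBu : Bq.mulVec u = 0 := by
    rw [hBdef, Matrix.add_mulVec, ← Matrix.mulVec_mulVec, ← Matrix.mulVec_mulVec,
      hdu, hAu0, hAw0, Matrix.mulVec_zero, add_zero]
  have hBurow : ∀ i, (∑ j, Bq i j * u j) = 0 := by
    intro i
    have := congrFun hBu i
    simpa [Matrix.mulVec, dotProduct] using this
  have htnn : ∀ (z : Fin n → ℝ) (i j : Fin n),
      0 ≤ Bq i j * u i * u j * (z i / u i - z j / u j) ^ 2 := by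
    intro z i j
    by_cases h : i = j
    · subst h; simp
    · exact mul_nonneg (mul_nonneg (mul_nonneg (hBoff i j h) (hu i).le) (hu j).le)
        (sq_nonneg _)
  have hkey : ∀ x : Fin n → ℝ,
      (∑ i, ∑ j, Bq i j * u i * u j * (x i / u i - x j / u j) ^ 2)
        = -2 * (x ⬝ᵥ Bq.mulVec x) := by
    intro x
    have hterm : ∀ i j : Fin n, Bq i j * u i * u j * (x i / u i - x j / u j) ^ 2
        = Bq i j * u j * (x i ^ 2 / u i) + Bq i j * u i * (x j ^ 2 / u j)
          - 2 * (x i * (Bq i j * x j)) := by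
      intro i j
      have hui := (hu i).ne'
      have huj := (hu j).ne'
      field_simp
      ring
    have h1 : (∑ i, ∑ j, Bq i j * u j * (x i ^ 2 / u i)) = 0 := by
      refine Finset.sum_eq_zero fun i _ => ?_
      rw [← Finset.sum_mul, hBurow i, zero_mul]
    have h2 : (∑ i, ∑ j, Bq i j * u i * (x j ^ 2 / u j)) = 0 := by
      rw [Finset.sum_comm]
      refine Finset.sum_eq_zero fun j _ => ?_
      have hcol : (∑ i, Bq i j * u i) = 0 := by
        rw [← hBurow j]
        exact Finset.sum_congr rfl fun i _ => by rw [hBsym i j]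
      rw [← Finset.sum_mul, hcol, zero_mul]
    have h3 : (∑ i, ∑ j, x i * (Bq i j * x j)) = x ⬝ᵥ Bq.mulVec x := by
      simp [dotProduct, Matrix.mulVec, Finset.mul_sum]
    have h4 : (∑ i, ∑ j, 2 * (x i * (Bq i j * x j)))
        = 2 * (x ⬝ᵥ Bq.mulVec x) := by
      rw [← h3, Finset.mul_sum]
      exact Finset.sum_congr rfl fun i _ => (Finset.mul_sum _ _ _).symm
    calc (∑ i, ∑ j, Bq i j * u i * u j * (x i / u i - x j / u j) ^ 2)
        = ∑ i, ∑ j, (Bq i j * u j * (x i ^ 2 / u i) + Bq i j * u i * (x j ^ 2 / u j)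
            - 2 * (x i * (Bq i j * x j))) :=
          Finset.sum_congr rfl fun i _ => Finset.sum_congr rfl fun j _ => hterm i j
      _ = (∑ i, ∑ j, Bq i j * u j * (x i ^ 2 / u i))
          + (∑ i, ∑ j, Bq i j * u i * (x j ^ 2 / u j))
          - (∑ i, ∑ j, 2 * (x i * (Bq i j * x j))) := by
          simp only [Finset.sum_sub_distrib, Finset.sum_add_distrib]
      _ = -2 * (x ⬝ᵥ Bq.mulVec x) := by
          rw [h1, h2, h4]; ring
  have hNSD : NegSemiDefQ Bq := by
    intro x
    have hnn : 0 ≤ ∑ i, ∑ j, Bq i j * u i * u j * (x i / u i - x j / u j) ^ 2 :=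
      Finset.sum_nonneg fun i _ => Finset.sum_nonneg fun j _ => htnn x i j
    have := hkey x
    linarith
  refine ⟨d, hd0, hNSD, u, hu, hBu, ?_⟩
  intro z hz
  have hz0 : z ⬝ᵥ Bq.mulVec z = 0 := by
    rw [← hBdef] at hz
    rw [hz, dotProduct_zero]
  have hsum0 : (∑ i, ∑ j, Bq i j * u i * u j * (z i / u i - z j / u j) ^ 2) = 0 := by
    rw [hkey z, hz0]; ring
  have hterm0 : ∀ i j, Bq i j * u i * u j * (z i / u i - z j / u j) ^ 2 = 0 := by
    intro i j
    have houter := (Finset.sum_eq_zero_iff_of_nonneg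
      (fun i _ => Finset.sum_nonneg fun j _ => htnn z i j)).1 hsum0 i (Finset.mem_univ i)
    exact (Finset.sum_eq_zero_iff_of_nonneg (fun j _ => htnn z i j)).1 houter j
      (Finset.mem_univ j)
  have hratio : ∀ i j, Bq i j ≠ 0 → z i / u i = z j / u j := by
    intro i j hBne
    have h := hterm0 i j
    have hfac : Bq i j * u i * u j ≠ 0 :=
      mul_ne_zero (mul_ne_zero hBne (hu i).ne') (hu j).ne'
    have hsq : (z i / u i - z j / u j) ^ 2 = 0 := by
      rcases mul_eq_zero.1 h with h' | h'
      · exact absurd h' hfac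
      · exact h'
    have := (pow_eq_zero_iff two_ne_zero).mp hsq
    exact sub_eq_zero.1 this
  set i0 : Fin n := ⟨0, hn⟩ with hi0
  refine ⟨z i0 / u i0, ?_⟩
  have hTuniv : {j : Fin n | z j / u j = z i0 / u i0} = Set.univ := by
    by_contra hT
    have hTne : Set.Nonempty {j : Fin n | z j / u j = z i0 / u i0} := ⟨i0, rfl⟩
    obtain ⟨i, hi, j, hj, hij⟩ := hIrr _ hTne hT
    have hne : i ≠ j := fun h => hj (h ▸ hi)
    have hBne : Bq i j ≠ 0 := by
      have hpos : 0 < d i * A i j :=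
        mul_pos (hd0 i) (lt_of_le_of_ne (hM i j hne) (Ne.symm hij))
      have hnn : 0 ≤ A j i * d j := mul_nonneg (hM j i (Ne.symm hne)) (hd0 j).le
      rw [hBapp]
      linarith
    exact hj (Set.mem_setOf.2 ((hratio i j hBne).symm.trans hi))
  funext jj
  have hjj : z jj / u jj = z i0 / u i0 := by
    have := hTuniv ▸ Set.mem_univ jj
    exact this
  have : z jj = (z jj / u jj) * u jj := (div_mul_cancel₀ (z jj) (hu jj).ne').symm
  rw [Pi.smul_apply, smul_eq_mul, ← hjj]
  exact this
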